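/- Define linear operators $U_1, U_2, \ldots$ on the free $\mathbb{Q}[\beta]$-module spanned by all partitions by: $U_i \cdot \mu = (-\beta)^{|\mu - e_i| - |\underline{\mu - e_i}|} \cdot \underline{\mu - e_i}$ if $\mu_i > 0$, and $U_i \cdot \mu = 0$ if $\mu_i = 0$, where for a sequence $n$, $\underline{n}$ is defined by $\underline{n}_i = \min(n_1, \ldots, n_i)$. Then the $U_i$ satisfy the reverse Knuth relations: $U_i U_k U_j = U_k U_i U_j$ for $i \ge j > k$, and $U_j U_i U_k = U_j U_k U_i$ for $i > j \ge k$. -/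

import Mathlib

open scoped Classical

/-- A partition: a finitely supported weakly decreasing sequence of natural numbers. -/
def PartitionF : Type := {f : ℕ →₀ ℕ // ∀ a b : ℕ, a ≤ b → f b ≤ f a}

/-- The size `|f| = ∑ᵢ fᵢ`. -/
def wt (f : ℕ →₀ ℕ) : ℕ := f.sum fun _ v => v

/-- `μ - e_i`: remove a box from row `i` (truncated at `0`). -/
noncomputable def remBox (i : ℕ) (f : ℕ →₀ ℕ) : ℕ →₀ ℕ := Finsupp.update f i (f i - 1)

/-- `f̲`: the prefix-minimum sequence `f̲ⱼ = min(f₀, …, fⱼ)`, the largest partition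
contained in `f` componentwise. -/
noncomputable def pbar (f : ℕ →₀ ℕ) : ℕ →₀ ℕ :=
  Finsupp.onFinset f.support
    (fun j => (Finset.range (j + 1)).inf' Finset.nonempty_range_add_one f)
    (by
      intro j hj
      simp only [Finsupp.mem_support_iff]
      intro hfj
      apply hj
      show (Finset.range (j + 1)).inf' Finset.nonempty_range_add_one f = 0
      have h1 : (Finset.range (j + 1)).inf' Finset.nonempty_range_add_one f ≤ f j :=
        Finset.inf'_le _ (Finset.self_mem_range_succ j)
      have h2 : 0 ≤ (Finset.range (j + 1)).inf' Finset.nonempty_range_add_one f := Nat.zero_le _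
      omega)

lemma pbar_anti (f : ℕ →₀ ℕ) : ∀ a b : ℕ, a ≤ b → pbar f b ≤ pbar f a := by
  intro a b hab
  simp only [pbar, Finsupp.onFinset_apply]
  obtain ⟨m, hm, hEq⟩ := Finset.exists_mem_eq_inf'
    (Finset.nonempty_range_add_one (n := a)) f
  calc (Finset.range (b + 1)).inf' Finset.nonempty_range_add_one f ≤ f m := by
        apply Finset.inf'_le
        simp only [Finset.mem_range] at hm ⊢
        omega
    _ = (Finset.range (a + 1)).inf' Finset.nonempty_range_add_one f := hEq.symm

/-- The operator `U_i` on the free `ℚ[β]`-module spanned by all partitions: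
`U_i · μ = (-β)^{|μ-e_i| - |underline(μ-e_i)|} · underline(μ-e_i)` if `μᵢ > 0`,
and `U_i · μ = 0` if `μᵢ = 0`. -/
noncomputable def Uop (i : ℕ) :
    (PartitionF →₀ Polynomial ℚ) →ₗ[Polynomial ℚ] (PartitionF →₀ Polynomial ℚ) :=
  Finsupp.lift (PartitionF →₀ Polynomial ℚ) (Polynomial ℚ) PartitionF fun p =>
    if 0 < p.1 i then
      ((-(Polynomial.X : Polynomial ℚ)) ^ (wt (remBox i p.1) - wt (pbar (remBox i p.1)))) •
        Finsupp.single (⟨pbar (remBox i p.1), pbar_anti _⟩ : PartitionF) (1 : Polynomial ℚ)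
    else 0


-- ===== auxiliary development =====

lemma remBox_apply' (i : ℕ) (f : ℕ →₀ ℕ) (j : ℕ) :
    remBox i f j = if j = i then f i - 1 else f j := by
  simp only [remBox, Finsupp.coe_update, Function.update]
  split <;> simp_all

lemma pbar_apply' (f : ℕ →₀ ℕ) (j : ℕ) :
    pbar f j = (Finset.range (j + 1)).inf' Finset.nonempty_range_add_one f := rfl

lemma pbar_remBox_apply (f : ℕ →₀ ℕ) (hf : ∀ a b : ℕ, a ≤ b → f b ≤ f a) (i j : ℕ) :
    pbar (remBox i f) j = if i ≤ j then min (f i - 1) (f j) else f j := by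
  rw [pbar_apply']
  apply le_antisymm
  · have h2 : (Finset.range (j + 1)).inf' Finset.nonempty_range_add_one (remBox i f) ≤ remBox i f j :=
      Finset.inf'_le _ (Finset.self_mem_range_succ j)
    have h2' : remBox i f j ≤ f j := by
      rw [remBox_apply']
      split
      · next h => subst h; omega
      · exact le_rfl
    split
    · next h =>
      have h1 : (Finset.range (j + 1)).inf' Finset.nonempty_range_add_one (remBox i f) ≤ remBox i f i :=
        Finset.inf'_le _ (by simp only [Finset.mem_range]; omega)
      rw [remBox_apply', if_pos rfl] at h1
      omega
    · omega
  · apply Finset.le_inf'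
    intro t ht
    simp only [Finset.mem_range] at ht
    have hfj : f j ≤ f t := hf t j (by omega)
    rcases eq_or_ne t i with rfl | hne
    · rw [remBox_apply', if_pos rfl, if_pos (by omega : t ≤ j)]
      omega
    · rw [remBox_apply', if_neg hne]
      split <;> omega

noncomputable def bnd (f : ℕ →₀ ℕ) (v : ℕ) : ℕ := sInf {n | f n < v}

lemma bnd_nonempty (f : ℕ →₀ ℕ) (v : ℕ) (hv : 0 < v) : {n | f n < v}.Nonempty := by
  classical
  refine ⟨(f.support.sup id) + 1, ?_⟩
  have h0 : f ((f.support.sup id) + 1) = 0 := by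
    by_contra h
    have hm : (f.support.sup id) + 1 ∈ f.support := Finsupp.mem_support_iff.mpr h
    have := Finset.le_sup (f := id) hm
    simp only [id_eq] at this
    omega
  simp [Set.mem_setOf_eq, h0, hv]

lemma lt_bnd_iff (f : ℕ →₀ ℕ) (hf : ∀ a b : ℕ, a ≤ b → f b ≤ f a) (v : ℕ) (hv : 0 < v)
    (j : ℕ) : j < bnd f v ↔ v ≤ f j := by
  constructor
  · intro h
    have : j ∉ {n | f n < v} := Nat.notMem_of_lt_sInf h
    simp only [Set.mem_setOf_eq] at this
    omega
  · intro h
    by_contra hc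
    push_neg at hc
    have hb : f (bnd f v) < v := Nat.sInf_mem (bnd_nonempty f v hv)
    have := hf _ _ hc
    omega

lemma bnd_congr (f g : ℕ →₀ ℕ) (v : ℕ) (h : ∀ n, f n < v ↔ g n < v) : bnd f v = bnd g v := by
  unfold bnd
  congr 1
  ext n
  exact h n

lemma bnd_eq (f : ℕ →₀ ℕ) (v m : ℕ) (hm : f m < v) (hlow : ∀ n, n < m → v ≤ f n) :
    bnd f v = m := by
  have hne : ({n | f n < v}).Nonempty := ⟨m, hm⟩
  have h1 : f (sInf {n | f n < v}) < v := Nat.sInf_mem hne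
  unfold bnd
  apply le_antisymm (Nat.sInf_le (show m ∈ {n | f n < v} from hm))
  by_contra h
  push_neg at h
  have h2 := hlow _ h
  omega

lemma wt_diff (f : ℕ →₀ ℕ) (hf : ∀ a b : ℕ, a ≤ b → f b ≤ f a) (i : ℕ) (hi : 0 < f i) :
    wt (remBox i f) - wt (pbar (remBox i f)) = bnd f (f i) - 1 - i := by
  classical
  set v := f i with hv
  set b := bnd f v with hb
  have hbi : ∀ j, (j < b ↔ v ≤ f j) := lt_bnd_iff f hf v hi
  have hib : i < b := (hbi i).mpr le_rfl
  set ν := remBox i f with hν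
  set w := pbar ν with hw
  have hwap : ∀ j, w j = if i ≤ j then min (f i - 1) (f j) else f j :=
    pbar_remBox_apply f hf i
  have hνap : ∀ j, ν j = if j = i then f i - 1 else f j := remBox_apply' i f
  have hsub : w.support ⊆ ν.support := by
    intro j hj
    simp only [Finsupp.mem_support_iff] at hj ⊢
    rw [hwap] at hj
    rw [hνap]
    split_ifs at hj ⊢ <;> omega
  have h1 : wt ν = ∑ j ∈ ν.support, ν j := rfl
  have h2 : wt w = ∑ j ∈ ν.support, w j := by
    rw [show wt w = ∑ j ∈ w.support, w j from rfl]
    exact Finset.sum_subset hsub (fun x _ hx => by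
      simpa [Finsupp.mem_support_iff] using hx)
  have key : ∀ j, ν j = w j + (if i < j ∧ j < b then 1 else 0) := by
    intro j
    have h3 := hbi j
    have h4 : i ≤ j → f j ≤ f i := fun h => hf i j h
    rw [hνap, hwap]
    split_ifs <;> omega
  have h5 : ∑ j ∈ ν.support, ν j
      = (∑ j ∈ ν.support, w j) + ∑ j ∈ ν.support, (if i < j ∧ j < b then 1 else 0) := by
    rw [← Finset.sum_add_distrib]
    exact Finset.sum_congr rfl fun j _ => key j
  have h6 : (ν.support.filter (fun j => i < j ∧ j < b)) = Finset.Ioo i b := by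
    ext j
    simp only [Finset.mem_filter, Finset.mem_Ioo, Finsupp.mem_support_iff]
    constructor
    · rintro ⟨_, h⟩; exact h
    · rintro ⟨hij, hjb⟩
      refine ⟨?_, hij, hjb⟩
      rw [hνap, if_neg (by omega)]
      have := (hbi j).mp hjb
      omega
  have h7 : ∑ j ∈ ν.support, (if i < j ∧ j < b then 1 else 0)
      = (ν.support.filter (fun j => i < j ∧ j < b)).card := by
    simp [Finset.sum_ite, Finset.sum_const]
  rw [h7, h6, Nat.card_Ioo] at h5
  omega

/-- The next partition after applying `U_i`. -/
noncomputable def nxt (i : ℕ) (p : PartitionF) : PartitionF :=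
  ⟨pbar (remBox i p.1), pbar_anti _⟩

/-- The exponent of `-β` appearing in `U_i · p`. -/
noncomputable def ex (i : ℕ) (p : PartitionF) : ℕ :=
  wt (remBox i p.1) - wt (pbar (remBox i p.1))

lemma nxt_apply (i : ℕ) (p : PartitionF) (j : ℕ) :
    (nxt i p).1 j = if i ≤ j then min (p.1 i - 1) (p.1 j) else p.1 j :=
  pbar_remBox_apply p.1 p.2 i j

lemma ex_eq (i : ℕ) (p : PartitionF) (hi : 0 < p.1 i) :
    ex i p = bnd p.1 (p.1 i) - 1 - i :=
  wt_diff p.1 p.2 i hi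

lemma Uop_single (i : ℕ) (p : PartitionF) (c : Polynomial ℚ) :
    Uop i (Finsupp.single p c) =
      if 0 < p.1 i then
        (c * (-(Polynomial.X : Polynomial ℚ)) ^ ex i p) • Finsupp.single (nxt i p) 1
      else 0 := by
  classical
  rw [Uop, Finsupp.lift_apply, Finsupp.sum_single_index (by simp)]
  show c • (if 0 < p.1 i then _ else (0 : PartitionF →₀ Polynomial ℚ)) = _
  split_ifs with h
  · show c • (if 0 < p.1 i then ((-(Polynomial.X : Polynomial ℚ)) ^ ex i p •
      Finsupp.single (nxt i p) (1 : Polynomial ℚ)) else 0) = _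
    rw [if_pos h, smul_smul]
  · simp [h]

lemma Uop_single_zero (i : ℕ) (p : PartitionF) (c : Polynomial ℚ) (h : p.1 i = 0) :
    Uop i (Finsupp.single p c) = 0 := by
  rw [Uop_single, if_neg (by omega)]

lemma Uop_single_pos (i : ℕ) (p : PartitionF) (c : Polynomial ℚ) (h : 0 < p.1 i) :
    Uop i (Finsupp.single p c) =
      (c * (-(Polynomial.X : Polynomial ℚ)) ^ ex i p) • Finsupp.single (nxt i p) 1 := by
  rw [Uop_single, if_pos h]

/-- Commutation of `U_i` and `U_k` when `k < i` and `q i < q k`. -/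
lemma claimA (k i : ℕ) (hki : k < i) (q : PartitionF) (h0 : 0 < q.1 i)
    (hlt : q.1 i < q.1 k) :
    Uop i (Uop k (Finsupp.single q (1 : Polynomial ℚ)))
      = Uop k (Uop i (Finsupp.single q (1 : Polynomial ℚ))) := by
  classical
  have hk0 : 0 < q.1 k := by omega
  have hAi : (nxt k q).1 i = q.1 i := by rw [nxt_apply]; split_ifs <;> omega
  have hBk : (nxt i q).1 k = q.1 k := by rw [nxt_apply]; split_ifs <;> omega
  rw [Uop_single_pos k q 1 hk0, map_smul, Uop_single_pos i _ 1 (by omega : 0 < (nxt k q).1 i),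
    Uop_single_pos i q 1 h0, map_smul, Uop_single_pos k _ 1 (by omega : 0 < (nxt i q).1 k)]
  have hexi : ex i (nxt k q) = ex i q := by
    rw [ex_eq _ _ (by omega : 0 < (nxt k q).1 i), ex_eq _ _ h0, hAi]
    have : bnd (nxt k q).1 (q.1 i) = bnd q.1 (q.1 i) := by
      apply bnd_congr
      intro n
      rw [nxt_apply]
      split_ifs <;> omega
    rw [this]
  have hexk : ex k (nxt i q) = ex k q := by
    rw [ex_eq _ _ (by omega : 0 < (nxt i q).1 k), ex_eq _ _ hk0, hBk]
    have : bnd (nxt i q).1 (q.1 k) = bnd q.1 (q.1 k) := by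
      apply bnd_congr
      intro n
      have han : i ≤ n → q.1 n ≤ q.1 i := fun h => q.2 i n h
      rw [nxt_apply]
      split_ifs <;> omega
    rw [this]
  have hqq : nxt i (nxt k q) = nxt k (nxt i q) := by
    apply Subtype.ext
    ext t
    show (nxt i (nxt k q)).1 t = (nxt k (nxt i q)).1 t
    simp only [nxt_apply]
    split_ifs <;> omega
  rw [smul_smul, smul_smul, hexi, hexk, hqq]
  ring_nf


/-- The key non-commuting case: `k ≤ j < i` and `p i = p k`. -/
lemma coreCase (k j i : ℕ) (hkj : k ≤ j) (hji : j < i) (p : PartitionF) (hi : 0 < p.1 i)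
    (heq : p.1 i = p.1 k) (c : Polynomial ℚ) :
    Uop j (Uop i (Uop k (Finsupp.single p c))) = Uop j (Uop k (Uop i (Finsupp.single p c))) := by
  classical
  have hk0 : 0 < p.1 k := by omega
  have hμj : p.1 j = p.1 i :=
    le_antisymm (heq ▸ p.2 k j hkj) (p.2 j i (le_of_lt hji))
  by_cases hv2 : p.1 i ≥ 2
  case neg =>
    -- p i = 1 : both sides vanish
    have hv1 : p.1 i = 1 := by omega
    rw [Uop_single_pos k p c hk0, map_smul]
    have hA1i : (nxt k p).1 i = 0 := by
      rw [nxt_apply]; split_ifs <;> omega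
    rw [Uop_single_zero i _ 1 hA1i, smul_zero, map_zero]
    rw [Uop_single_pos i p c hi, map_smul]
    have hB1k : (nxt i p).1 k = p.1 k := by
      rw [nxt_apply, if_neg (by omega)]
    rw [Uop_single_pos k _ 1 (by omega), map_smul]
    have hB2j : (nxt k (nxt i p)).1 j = 0 := by
      simp only [nxt_apply]; split_ifs <;> omega
    rw [map_smul, Uop_single_zero j _ 1 hB2j, smul_zero, smul_zero]
  case pos =>
    set v := p.1 i with hv
    have hμk : p.1 k = v := heq.symm
    set b1 := bnd p.1 v with hb1
    set b0 := bnd p.1 (v - 1) with hb0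
    have hkb1 : k < b1 := (lt_bnd_iff p.1 p.2 v (by omega) k).mpr (by omega)
    have hib1 : i < b1 := (lt_bnd_iff p.1 p.2 v (by omega) i).mpr (by omega)
    have hib0 : i < b0 := (lt_bnd_iff p.1 p.2 (v - 1) (by omega) i).mpr (by omega)
    -- LHS chain
    have hA1i : (nxt k p).1 i = v - 1 := by
      rw [nxt_apply]; split_ifs <;> omega
    have hA2j : (nxt i (nxt k p)).1 j = v - 1 := by
      simp only [nxt_apply]; split_ifs <;> omega
    -- RHS chain
    have hB1k : (nxt i p).1 k = v := by
      rw [nxt_apply, if_neg (by omega)]; omega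
    have hB2j : (nxt k (nxt i p)).1 j = v - 1 := by
      simp only [nxt_apply]; split_ifs <;> omega
    -- exponents
    have he1 : ex k p = b1 - 1 - k := by
      rw [ex_eq k p hk0, hμk]
    have he2 : ex i (nxt k p) = b0 - 1 - i := by
      rw [ex_eq i _ (by omega), hA1i]
      congr 1
      have : bnd (nxt k p).1 (v - 1) = b0 := by
        apply bnd_congr
        intro n
        rw [nxt_apply]
        split_ifs <;> omega
      omega
    have he3 : ex j (nxt i (nxt k p)) = i - 1 - j := by
      rw [ex_eq j _ (by omega), hA2j]
      have : bnd (nxt i (nxt k p)).1 (v - 1) = i := by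
        apply bnd_eq
        · simp only [nxt_apply]; split_ifs <;> omega
        · intro n hn
          have hni := p.2 n i (le_of_lt hn)
          simp only [nxt_apply]
          split_ifs <;> omega
      omega
    have hf1 : ex i p = b1 - 1 - i := by
      rw [ex_eq i p hi]
    have hf2 : ex k (nxt i p) = i - 1 - k := by
      rw [ex_eq k _ (by omega), hB1k]
      have : bnd (nxt i p).1 v = i := by
        apply bnd_eq
        · rw [nxt_apply]; split_ifs <;> omega
        · intro n hn
          have hni := p.2 n i (le_of_lt hn)
          rw [nxt_apply]
          split_ifs <;> omega
      omega
    have hf3 : ex j (nxt k (nxt i p)) = b0 - 1 - j := by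
      rw [ex_eq j _ (by omega), hB2j]
      have : bnd (nxt k (nxt i p)).1 (v - 1) = b0 := by
        apply bnd_congr
        intro n
        simp only [nxt_apply]
        split_ifs <;> omega
      omega
    -- final partitions agree
    have hfinal : nxt j (nxt i (nxt k p)) = nxt j (nxt k (nxt i p)) := by
      apply Subtype.ext
      ext t
      show (nxt j (nxt i (nxt k p))).1 t = (nxt j (nxt k (nxt i p))).1 t
      simp only [nxt_apply]
      split_ifs <;> omega
    -- assemble
    rw [Uop_single_pos k p c hk0, map_smul, Uop_single_pos i _ 1 (by omega), map_smul,
      map_smul, Uop_single_pos j _ 1 (by omega)]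
    rw [Uop_single_pos i p c hi, map_smul, Uop_single_pos k _ 1 (by omega), map_smul,
      map_smul, Uop_single_pos j _ 1 (by omega)]
    rw [hfinal, smul_smul, smul_smul, smul_smul, smul_smul]
    congr 1
    rw [he1, he2, he3, hf1, hf2, hf3]
    simp only [one_mul, mul_assoc, ← pow_add]
    congr 2
    omega

/-- The operators `U_i` satisfy the reverse Knuth relations:
`U_i U_k U_j = U_k U_i U_j` for `i ≥ j > k`, and
`U_j U_i U_k = U_j U_k U_i` for `i > j ≥ k`. -/
theorem Uop_reverse_knuth :
    (∀ i j k : ℕ, j ≤ i → k < j →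
      Uop i ∘ₗ Uop k ∘ₗ Uop j = Uop k ∘ₗ Uop i ∘ₗ Uop j) ∧
    (∀ i j k : ℕ, j < i → k ≤ j →
      Uop j ∘ₗ Uop i ∘ₗ Uop k = Uop j ∘ₗ Uop k ∘ₗ Uop i) := by
  classical
  constructor
  · -- relation 1 : i ≥ j > k
    intro i j k hji hkj
    apply Finsupp.lhom_ext
    intro p c
    simp only [LinearMap.comp_apply]
    by_cases hj : 0 < p.1 j
    · rw [Uop_single_pos j p c hj, map_smul, map_smul, map_smul, map_smul]
      congr 1
      set q := nxt j p with hq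
      by_cases hi : 0 < q.1 i
      · have h1 : q.1 i ≤ p.1 j - 1 := by
          rw [hq, nxt_apply, if_pos hji]; omega
        have h2 : q.1 k = p.1 k := by
          rw [hq, nxt_apply, if_neg (by omega)]
        have h3 : p.1 j ≤ p.1 k := p.2 k j (le_of_lt hkj)
        exact claimA k i (by omega) q hi (by omega)
      · have hqi : q.1 i = 0 := by omega
        rw [Uop_single_zero i q 1 hqi, map_zero]
        by_cases hk : 0 < q.1 k
        · rw [Uop_single_pos k q 1 hk, map_smul]
          have h4 : (nxt k q).1 i = 0 := by
            rw [nxt_apply]; split_ifs <;> omega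
          rw [Uop_single_zero i _ 1 h4, smul_zero]
        · rw [Uop_single_zero k q 1 (by omega), map_zero]
    · rw [Uop_single_zero j p c (by omega)]
      simp
  · -- relation 2 : i > j ≥ k
    intro i j k hji hkj
    apply Finsupp.lhom_ext
    intro p c
    simp only [LinearMap.comp_apply]
    by_cases hi : 0 < p.1 i
    · have hki : k ≤ i := by omega
      have hk0 : 0 < p.1 k := lt_of_lt_of_le hi (p.2 k i hki)
      by_cases hik : p.1 i < p.1 k
      · have hc : Finsupp.single p c = c • Finsupp.single p (1 : Polynomial ℚ) := by
          rw [Finsupp.smul_single, smul_eq_mul, mul_one]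
        rw [hc, map_smul, map_smul, map_smul, map_smul, map_smul, map_smul,
          claimA k i (by omega) p hi hik]
      · have heq : p.1 i = p.1 k := le_antisymm (p.2 k i hki) (by omega)
        exact coreCase k j i hkj hji p hi heq c
    · rw [Uop_single_zero i p c (by omega), map_zero, map_zero]
      by_cases hk : 0 < p.1 k
      · rw [Uop_single_pos k p c hk, map_smul]
        have h4 : (nxt k p).1 i = 0 := by
          rw [nxt_apply]; split_ifs <;> omega
        rw [Uop_single_zero i _ 1 h4, smul_zero, map_zero]
      · rw [Uop_single_zero k p c (by omega)]
        simp
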